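/- arXiv:1210.3236 — 2 statements merged into one kernel-verified Lean document; each statement's English description precedes it below -/
import Mathlib

section
/- The Benkart–Witherspoon R-matrix R is invertible, and its inverse is given by R⁻¹ = r⁻¹ s R + (1 − r⁻¹ s) I, i.e. R · (r⁻¹ s R + (1 − r⁻¹ s) I) = I. -/
open Matrix Kronecker BigOperators

/-- The `n × n` matrix unit `E i j` over `ℂ`. -/
noncomputable def E (n : ℕ) (i j : Fin n) : Matrix (Fin n) (Fin n) ℂ :=
  Matrix.single i j 1

/-- The Benkart–Witherspoon R-matrix on `V ⊗ V`. -/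
noncomputable def BWR (n : ℕ) (r s : ℂ) : Matrix (Fin n × Fin n) (Fin n × Fin n) ℂ :=
  (∑ i : Fin n, E n i i ⊗ₖ E n i i)
  + r • (∑ i : Fin n, ∑ j : Fin n, if i < j then E n j i ⊗ₖ E n i j else 0)
  + s⁻¹ • (∑ i : Fin n, ∑ j : Fin n, if i < j then E n i j ⊗ₖ E n j i else 0)
  + (1 - r * s⁻¹) • (∑ i : Fin n, ∑ j : Fin n, if i < j then E n j j ⊗ₖ E n i i else 0)

lemma L1 (n : ℕ) (i j k l : Fin n) :
    (∑ a : Fin n, E n a a ⊗ₖ E n a a) (i,j) (k,l)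
      = if i = j ∧ k = i ∧ l = i then 1 else 0 := by
  simp only [E, Matrix.sum_apply, Matrix.kroneckerMap_apply, Matrix.single,
    Matrix.of_apply, ite_and, mul_ite, mul_one, mul_zero, ite_mul, zero_mul, one_mul]
  rw [Finset.sum_congr rfl (fun x _ => show _ =
    if x = j then (if i = j ∧ k = i ∧ l = i then (1:ℂ) else 0) else 0
    from by split_ifs <;> simp_all)]
  simp [ite_and]

lemma L2 (n : ℕ) (i j k l : Fin n) :
    (∑ a : Fin n, ∑ b : Fin n, if a < b then E n b a ⊗ₖ E n a b else 0) (i,j) (k,l)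
      = if j < i ∧ k = j ∧ l = i then 1 else 0 := by
  simp only [E, Matrix.sum_apply,
    apply_ite (fun M : Matrix (Fin n × Fin n) (Fin n × Fin n) ℂ => M (i,j) (k,l)),
    Matrix.zero_apply, Matrix.kroneckerMap_apply, Matrix.single, Matrix.of_apply,
    ite_and, mul_ite, mul_one, mul_zero, ite_mul, zero_mul, one_mul]
  rw [Finset.sum_congr rfl (fun x _ => Finset.sum_congr rfl (fun y _ => show _ =
    if x = j then if y = i then (if j < i ∧ k = j ∧ l = i then (1:ℂ) else 0) else 0 else 0
    from by split_ifs <;> simp_all))]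
  simp [ite_and]

lemma L3 (n : ℕ) (i j k l : Fin n) :
    (∑ a : Fin n, ∑ b : Fin n, if a < b then E n a b ⊗ₖ E n b a else 0) (i,j) (k,l)
      = if i < j ∧ k = j ∧ l = i then 1 else 0 := by
  simp only [E, Matrix.sum_apply,
    apply_ite (fun M : Matrix (Fin n × Fin n) (Fin n × Fin n) ℂ => M (i,j) (k,l)),
    Matrix.zero_apply, Matrix.kroneckerMap_apply, Matrix.single, Matrix.of_apply,
    ite_and, mul_ite, mul_one, mul_zero, ite_mul, zero_mul, one_mul]
  rw [Finset.sum_congr rfl (fun x _ => Finset.sum_congr rfl (fun y _ => show _ =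
    if x = i then if y = j then (if i < j ∧ k = j ∧ l = i then (1:ℂ) else 0) else 0 else 0
    from by split_ifs <;> simp_all))]
  simp [ite_and]

lemma L4 (n : ℕ) (i j k l : Fin n) :
    (∑ a : Fin n, ∑ b : Fin n, if a < b then E n b b ⊗ₖ E n a a else 0) (i,j) (k,l)
      = if j < i ∧ k = i ∧ l = j then 1 else 0 := by
  simp only [E, Matrix.sum_apply,
    apply_ite (fun M : Matrix (Fin n × Fin n) (Fin n × Fin n) ℂ => M (i,j) (k,l)),
    Matrix.zero_apply, Matrix.kroneckerMap_apply, Matrix.single, Matrix.of_apply,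
    ite_and, mul_ite, mul_one, mul_zero, ite_mul, zero_mul, one_mul]
  rw [Finset.sum_congr rfl (fun x _ => Finset.sum_congr rfl (fun y _ => show _ =
    if x = j then if y = i then (if j < i ∧ k = i ∧ l = j then (1:ℂ) else 0) else 0 else 0
    from by split_ifs <;> simp_all))]
  simp [ite_and]

lemma BWR_apply (n : ℕ) (r s : ℂ) (i j k l : Fin n) :
    BWR n r s (i,j) (k,l) =
      if i = j then (if k = i ∧ l = j then 1 else 0)
      else if i < j then (if k = j ∧ l = i then s⁻¹ else 0)
      else (if k = j ∧ l = i then r else if k = i ∧ l = j then 1 - r*s⁻¹ else 0) := by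
  simp only [BWR, Matrix.add_apply, Matrix.smul_apply, L1, L2, L3, L4, smul_eq_mul]
  rcases lt_trichotomy i j with h | h | h
  · simp [h.ne, h, not_lt.mpr h.le]
  · simp [h]
  · simp only [h, h.ne', lt_asymm h, false_and, true_and, if_false, if_true,
      ite_false, ite_true, mul_zero, mul_one, mul_ite, zero_add, add_zero]
    split_ifs with h1 h2
    · exact absurd (h1.1.symm.trans h2.1) h.ne
    · ring
    · ring
    · ring

lemma sum_pin {n : ℕ} (g : Fin n → Fin n → ℂ) (a b : Fin n) (c : ℂ) :
    (∑ x : Fin n, ∑ y : Fin n, (if x = a ∧ y = b then c else 0) * g x y) = c * g a b := by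
  simp [ite_and, ite_mul, Finset.sum_ite_eq']

lemma sum_pin2 {n : ℕ} (g : Fin n → Fin n → ℂ) (a b a' b' : Fin n) (c d : ℂ)
    (hne : ¬(a = a' ∧ b = b')) :
    (∑ x : Fin n, ∑ y : Fin n,
      (if x = a ∧ y = b then c else if x = a' ∧ y = b' then d else 0) * g x y)
      = c * g a b + d * g a' b' := by
  have : ∀ x y : Fin n,
      (if x = a ∧ y = b then c else if x = a' ∧ y = b' then d else 0) * g x y
      = (if x = a ∧ y = b then c else 0) * g x y
        + (if x = a' ∧ y = b' then d else 0) * g x y := by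
    intro x y
    split_ifs <;> simp_all
  simp only [this, Finset.sum_add_distrib, sum_pin]

/-- The Benkart–Witherspoon R-matrix is invertible, with inverse
`R⁻¹ = r⁻¹ s R + (1 − r⁻¹ s) I`. -/
theorem stmt2 (n : ℕ) (hn : 2 ≤ n) (r s : ℂ) (hr : r ≠ 0) (hs : s ≠ 0) (hrs : r ≠ s) :
    IsUnit (BWR n r s) ∧
    BWR n r s * ((r⁻¹ * s) • BWR n r s
      + (1 - r⁻¹ * s) • (1 : Matrix (Fin n × Fin n) (Fin n × Fin n) ℂ)) = 1 := by
  have key : BWR n r s * ((r⁻¹ * s) • BWR n r s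
      + (1 - r⁻¹ * s) • (1 : Matrix (Fin n × Fin n) (Fin n × Fin n) ℂ)) = 1 := by
    ext ⟨i, j⟩ ⟨k, l⟩
    rw [Matrix.mul_apply, Fintype.sum_prod_type, Matrix.one_apply]
    have hgdef : ∀ p q : Fin n, ((r⁻¹ * s) • BWR n r s
        + (1 - r⁻¹ * s) • (1 : Matrix (Fin n × Fin n) (Fin n × Fin n) ℂ)) (p, q) (k, l)
        = (r⁻¹ * s) * BWR n r s (p, q) (k, l)
          + (1 - r⁻¹ * s) * (if p = k ∧ q = l then 1 else 0) := by
      intro p q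
      simp [Matrix.add_apply, Matrix.smul_apply, Matrix.one_apply, Prod.ext_iff]
    rcases lt_trichotomy i j with h | h | h
    · -- i < j : first factor pins x = (j,i) with value s⁻¹
      have h1 : ∀ x y : Fin n, BWR n r s (i, j) (x, y) = if x = j ∧ y = i then s⁻¹ else 0 := by
        intro x y; rw [BWR_apply]; simp [h, h.ne]
      simp only [h1]
      rw [sum_pin]
      rw [hgdef, BWR_apply]
      simp only [if_neg h.ne', if_neg (lt_asymm h)]
      simp only [Prod.mk.injEq, if_true, ite_true]
      have hij : ¬ i = j := h.ne
      have hji : ¬ j = i := h.ne'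
      clear h1 hgdef
      split_ifs <;>
        first
          | (exfalso; simp only [Fin.ext_iff, Fin.lt_def] at *; omega)
          | (field_simp; ring)
          | field_simp
          | ring
    · -- i = j
      subst h
      have h1 : ∀ x y : Fin n, BWR n r s (i, i) (x, y) = if x = i ∧ y = i then 1 else 0 := by
        intro x y; rw [BWR_apply]; simp
      simp only [h1]
      rw [sum_pin, hgdef, BWR_apply]
      simp only [if_pos rfl]
      simp only [Prod.mk.injEq, if_true, ite_true]
      clear h1 hgdef
      split_ifs <;>
        first
          | (exfalso; simp only [Fin.ext_iff, Fin.lt_def] at *; omega)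
          | (field_simp; ring)
          | field_simp
          | ring
    · -- j < i
      have h1 : ∀ x y : Fin n, BWR n r s (i, j) (x, y)
          = if x = j ∧ y = i then r else if x = i ∧ y = j then 1 - r * s⁻¹ else 0 := by
        intro x y; rw [BWR_apply]; simp [h.ne', lt_asymm h]
      simp only [h1]
      rw [sum_pin2 _ _ _ _ _ _ _ (by rintro ⟨rfl, -⟩; exact lt_irrefl _ h)]
      rw [hgdef, hgdef, BWR_apply, BWR_apply]
      simp only [if_neg h.ne, if_pos h, if_neg h.ne', if_neg (lt_asymm h)]
      simp only [Prod.mk.injEq, if_true, ite_true]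
      have hij : ¬ i = j := h.ne'
      have hji : ¬ j = i := h.ne
      clear h1 hgdef
      split_ifs <;>
        first
          | (exfalso; simp only [Fin.ext_iff, Fin.lt_def] at *; omega)
          | (field_simp; ring)
          | field_simp
          | ring
  refine ⟨(Matrix.isUnit_iff_isUnit_det _).mpr (Matrix.isUnit_det_of_right_inverse key), key⟩
end

section
/- The image of the linear map R(r⁻¹ s) on V ⊗ V equals the subspace Λ²_{r,s}(V). -/
open Matrix Kronecker BigOperators

/-- The spectral-parameter R-matrix `R(z)`. -/
noncomputable def Rz (n : ℕ) (r s z : ℂ) : Matrix (Fin n × Fin n) (Fin n × Fin n) ℂ :=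
  (1 - z * (r * s⁻¹)) • (∑ i : Fin n, E n i i ⊗ₖ E n i i)
  + (1 - z) • (r • (∑ i : Fin n, ∑ j : Fin n, if j < i then E n i j ⊗ₖ E n j i else 0)
      + s⁻¹ • (∑ i : Fin n, ∑ j : Fin n, if i < j then E n i j ⊗ₖ E n j i else 0))
  + (z * (1 - r * s⁻¹)) • (∑ i : Fin n, ∑ j : Fin n, if i < j then E n i i ⊗ₖ E n j j else 0)
  + (1 - r * s⁻¹) • (∑ i : Fin n, ∑ j : Fin n, if j < i then E n i i ⊗ₖ E n j j else 0)

lemma sum1 (n : ℕ) (a b k l : Fin n) :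
    (∑ i : Fin n, E n i i ⊗ₖ E n i i) (a,b) (k,l)
      = if a = b ∧ k = a ∧ l = a then 1 else 0 := by
  simp only [Matrix.sum_apply, Matrix.kroneckerMap_apply, E, Matrix.single,
    Matrix.of_apply, mul_ite, ite_mul, one_mul, mul_zero, zero_mul, mul_one]
  rw [Finset.sum_eq_single a] <;> aesop

lemma sum2 (n : ℕ) (a b k l : Fin n) :
    (∑ i : Fin n, ∑ j : Fin n, if j < i then E n i j ⊗ₖ E n j i else 0) (a,b) (k,l)
      = if b < a ∧ k = b ∧ l = a then 1 else 0 := by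
  simp only [Matrix.sum_apply, Matrix.kroneckerMap_apply, E, Matrix.single,
    Matrix.of_apply, Matrix.zero_apply, ite_apply, apply_ite, mul_ite, ite_mul, one_mul,
    mul_zero, zero_mul, mul_one]
  rw [Finset.sum_eq_single a]
  · rw [Finset.sum_eq_single b] <;> aesop
  · intro i _ hi; apply Finset.sum_eq_zero; aesop
  · simp

lemma sum3 (n : ℕ) (a b k l : Fin n) :
    (∑ i : Fin n, ∑ j : Fin n, if i < j then E n i j ⊗ₖ E n j i else 0) (a,b) (k,l)
      = if a < b ∧ k = b ∧ l = a then 1 else 0 := by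
  simp only [Matrix.sum_apply, Matrix.kroneckerMap_apply, E, Matrix.single,
    Matrix.of_apply, Matrix.zero_apply, ite_apply, apply_ite, mul_ite, ite_mul, one_mul,
    mul_zero, zero_mul, mul_one]
  rw [Finset.sum_eq_single a]
  · rw [Finset.sum_eq_single b] <;> aesop
  · intro i _ hi; apply Finset.sum_eq_zero; aesop
  · simp

lemma sum4 (n : ℕ) (a b k l : Fin n) :
    (∑ i : Fin n, ∑ j : Fin n, if i < j then E n i i ⊗ₖ E n j j else 0) (a,b) (k,l)
      = if a < b ∧ k = a ∧ l = b then 1 else 0 := by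
  simp only [Matrix.sum_apply, Matrix.kroneckerMap_apply, E, Matrix.single,
    Matrix.of_apply, Matrix.zero_apply, ite_apply, apply_ite, mul_ite, ite_mul, one_mul,
    mul_zero, zero_mul, mul_one]
  rw [Finset.sum_eq_single a]
  · rw [Finset.sum_eq_single b] <;> aesop
  · intro i _ hi; apply Finset.sum_eq_zero; aesop
  · simp

lemma sum5 (n : ℕ) (a b k l : Fin n) :
    (∑ i : Fin n, ∑ j : Fin n, if j < i then E n i i ⊗ₖ E n j j else 0) (a,b) (k,l)
      = if b < a ∧ k = a ∧ l = b then 1 else 0 := by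
  simp only [Matrix.sum_apply, Matrix.kroneckerMap_apply, E, Matrix.single,
    Matrix.of_apply, Matrix.zero_apply, ite_apply, apply_ite, mul_ite, ite_mul, one_mul,
    mul_zero, zero_mul, mul_one]
  rw [Finset.sum_eq_single a]
  · rw [Finset.sum_eq_single b] <;> aesop
  · intro i _ hi; apply Finset.sum_eq_zero; aesop
  · simp

lemma Rz_entry (n : ℕ) (r s z : ℂ) (a b k l : Fin n) :
    Rz n r s z (a,b) (k,l) =
      (if a = b ∧ k = a ∧ l = a then (1 - z*(r*s⁻¹)) else 0)
    + (1-z) * ((if b < a ∧ k = b ∧ l = a then r else 0)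
        + (if a < b ∧ k = b ∧ l = a then s⁻¹ else 0))
    + (if a < b ∧ k = a ∧ l = b then z*(1-r*s⁻¹) else 0)
    + (if b < a ∧ k = a ∧ l = b then (1-r*s⁻¹) else 0) := by
  simp only [Rz, Matrix.add_apply, Matrix.smul_apply, smul_eq_mul,
    sum1, sum2, sum3, sum4, sum5, mul_ite, mul_one, mul_zero]

open Matrix

lemma col_lt (n : ℕ) (r s : ℂ) (hr : r ≠ 0) (hs : s ≠ 0) (k l : Fin n) (h : k < l) :
    (Rz n r s (r⁻¹*s))ᵀ (k,l)
      = ((r⁻¹*s)*(1 - r*s⁻¹)) • ((Pi.single (k,l) 1 : Fin n × Fin n → ℂ)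
          - r • (Pi.single (l,k) 1 : Fin n × Fin n → ℂ)) := by
  have hkl : k ≠ l := ne_of_lt h
  have hlk : ¬ l < k := not_lt_of_gt h
  funext p
  obtain ⟨a, b⟩ := p
  rw [Matrix.transpose_apply, Rz_entry]
  simp only [Pi.smul_apply, Pi.sub_apply, Pi.single_apply, Prod.mk.injEq, smul_eq_mul]
  by_cases h1 : a = l ∧ b = k
  · obtain ⟨rfl, rfl⟩ := h1
    simp only [hkl, hkl.symm, h, hlk, lt_irrefl, and_true, and_false, false_and, true_and,
      if_true, if_false, eq_self_iff_true, not_true, asymm h]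
    field_simp
    ring
  · by_cases h2 : a = k ∧ b = l
    · obtain ⟨rfl, rfl⟩ := h2
      simp only [hkl, hkl.symm, h, hlk, lt_irrefl, and_true, and_false, false_and, true_and,
        if_true, if_false, eq_self_iff_true, not_true, asymm h]
      ring
    · have n1 : ¬(a = b ∧ k = a ∧ l = a) := fun ⟨_, h3, h4⟩ => hkl (h3.trans h4.symm)
      have n2 : ¬(b < a ∧ k = b ∧ l = a) := fun ⟨_, h3, h4⟩ => h1 ⟨h4.symm, h3.symm⟩
      have n3 : ¬(a < b ∧ k = b ∧ l = a) := fun ⟨_, h3, h4⟩ => h1 ⟨h4.symm, h3.symm⟩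
      have n4 : ¬(a < b ∧ k = a ∧ l = b) := fun ⟨_, h3, h4⟩ => h2 ⟨h3.symm, h4.symm⟩
      have n5 : ¬(b < a ∧ k = a ∧ l = b) := fun ⟨_, h3, h4⟩ => h2 ⟨h3.symm, h4.symm⟩
      simp only [n1, n2, n3, n4, n5, h1, h2, if_false, if_neg]
      ring

lemma col_gt (n : ℕ) (r s : ℂ) (hr : r ≠ 0) (hs : s ≠ 0) (k l : Fin n) (h : l < k) :
    (Rz n r s (r⁻¹*s))ᵀ (k,l)
      = ((1 - r⁻¹*s)*s⁻¹) • ((Pi.single (l,k) 1 : Fin n × Fin n → ℂ)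
          - r • (Pi.single (k,l) 1 : Fin n × Fin n → ℂ)) := by
  have hkl : l ≠ k := ne_of_lt h
  have hlk : ¬ k < l := not_lt_of_gt h
  funext p
  obtain ⟨a, b⟩ := p
  rw [Matrix.transpose_apply, Rz_entry]
  simp only [Pi.smul_apply, Pi.sub_apply, Pi.single_apply, Prod.mk.injEq, smul_eq_mul]
  by_cases h1 : a = l ∧ b = k
  · obtain ⟨rfl, rfl⟩ := h1
    simp only [hkl, hkl.symm, h, hlk, lt_irrefl, and_true, and_false, false_and, true_and,
      if_true, if_false, eq_self_iff_true, not_true, asymm h]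
    ring
  · by_cases h2 : a = k ∧ b = l
    · obtain ⟨rfl, rfl⟩ := h2
      simp only [hkl, hkl.symm, h, hlk, lt_irrefl, and_true, and_false, false_and, true_and,
        if_true, if_false, eq_self_iff_true, not_true, asymm h]
      field_simp
      ring
    · have n1 : ¬(a = b ∧ k = a ∧ l = a) := fun ⟨_, h3, h4⟩ => hkl (h4.trans h3.symm)
      have n2 : ¬(b < a ∧ k = b ∧ l = a) := fun ⟨_, h3, h4⟩ => h1 ⟨h4.symm, h3.symm⟩
      have n3 : ¬(a < b ∧ k = b ∧ l = a) := fun ⟨_, h3, h4⟩ => h1 ⟨h4.symm, h3.symm⟩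
      have n4 : ¬(a < b ∧ k = a ∧ l = b) := fun ⟨_, h3, h4⟩ => h2 ⟨h3.symm, h4.symm⟩
      have n5 : ¬(b < a ∧ k = a ∧ l = b) := fun ⟨_, h3, h4⟩ => h2 ⟨h3.symm, h4.symm⟩
      simp only [n1, n2, n3, n4, n5, h1, h2, if_false, if_neg]
      ring

lemma col_diag (n : ℕ) (r s : ℂ) (hr : r ≠ 0) (hs : s ≠ 0) (k : Fin n) :
    (Rz n r s (r⁻¹*s))ᵀ (k,k) = 0 := by
  funext p
  obtain ⟨a, b⟩ := p
  rw [Matrix.transpose_apply, Rz_entry]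
  have hz : 1 - (r⁻¹*s) * (r * s⁻¹) = 0 := by field_simp; ring
  by_cases h1 : a = k ∧ b = k
  · obtain ⟨rfl, rfl⟩ := h1
    simp [hz, lt_irrefl]
  · have n1 : ¬(a = b ∧ k = a ∧ k = a) := fun ⟨h0, h3, _⟩ => h1 ⟨h3.symm, h0.symm.trans h3.symm⟩
    have n2 : ¬(b < a ∧ k = b ∧ k = a) := fun ⟨hlt, h3, h4⟩ => absurd (h3.symm.trans h4) (ne_of_lt hlt)
    have n3 : ¬(a < b ∧ k = b ∧ k = a) := fun ⟨hlt, h3, h4⟩ => absurd (h4.symm.trans h3) (ne_of_lt hlt)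
    have n4 : ¬(a < b ∧ k = a ∧ k = b) := fun ⟨hlt, h3, h4⟩ => absurd (h3.symm.trans h4) (ne_of_lt hlt)
    have n5 : ¬(b < a ∧ k = a ∧ k = b) := fun ⟨hlt, h3, h4⟩ => absurd (h3.symm.trans h4) (ne_of_lt hlt).symm
    simp [n1, n2, n3, n4, n5, hz]

/-- The `(r,s)`-antisymmetric square `Λ²_{r,s}(V) ⊆ V ⊗ V`. -/
noncomputable def Lsub (n : ℕ) (r : ℂ) : Submodule ℂ (Fin n × Fin n → ℂ) :=
  Submodule.span ℂ { f | ∃ i j : Fin n, i < j ∧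
    f = (Pi.single (i, j) 1 : Fin n × Fin n → ℂ) - r • (Pi.single (j, i) 1 : Fin n × Fin n → ℂ) }

/-- The image of `R(r⁻¹ s)` on `V ⊗ V` equals `Λ²_{r,s}(V)`. -/
theorem stmt16 (n : ℕ) (hn : 2 ≤ n) (r s : ℂ) (hr : r ≠ 0) (hs : s ≠ 0) (hrs : r ≠ s) (hsr : s ≠ -r) :
    LinearMap.range (Rz n r s (r⁻¹ * s)).mulVecLin = Lsub n r := by
  have hc : (r⁻¹*s)*(1 - r*s⁻¹) ≠ 0 := by
    apply mul_ne_zero (mul_ne_zero (inv_ne_zero hr) hs)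
    rw [sub_ne_zero]
    intro h
    apply hrs
    field_simp at h
    exact h.symm
  rw [Matrix.range_mulVecLin]
  apply le_antisymm
  · rw [Submodule.span_le]
    rintro f ⟨⟨k, l⟩, rfl⟩
    change (Rz n r s (r⁻¹ * s))ᵀ (k, l) ∈ _
    rcases lt_trichotomy k l with hkl | rfl | hlk
    · rw [col_lt n r s hr hs k l hkl]
      exact Submodule.smul_mem _ _ (Submodule.subset_span ⟨k, l, hkl, rfl⟩)
    · rw [col_diag n r s hr hs k]
      exact Submodule.zero_mem _
    · rw [col_gt n r s hr hs k l hlk]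
      exact Submodule.smul_mem _ _ (Submodule.subset_span ⟨l, k, hlk, rfl⟩)
  · rw [Lsub, Submodule.span_le]
    rintro f ⟨i, j, hij, rfl⟩
    have key : (Pi.single (i, j) 1 : Fin n × Fin n → ℂ) - r • (Pi.single (j, i) 1 : Fin n × Fin n → ℂ)
        = ((r⁻¹*s)*(1 - r*s⁻¹))⁻¹ • (Rz n r s (r⁻¹*s))ᵀ (i,j) := by
      rw [col_lt n r s hr hs i j hij, smul_smul, inv_mul_cancel₀ hc, one_smul]
    rw [key]
    exact Submodule.smul_mem _ _ (Submodule.subset_span ⟨(i,j), rfl⟩)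
end
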